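/- Let G be a topological group acting continuously on topological spaces X and P, and let r ≥ 2. Let ρ_r ×_G 1 : (C([0,1],X) × P)/G → (X^r × P)/G denote the continuous map induced on the orbit spaces of the diagonal G-actions by ρ_r × id_P : C([0,1],X) × P → X^r × P. Then secat[ρ_r ×_G 1] ≤ TC_{r,G}(X). (For a locally trivial bundle p : E = X ×_G P → B = P/G with structure group G associated to a principal G-bundle τ : P → B, the left-hand side equals the sequential parametrized topological complexity TC_r[p : E → B] under the canonical identifications E^I_B ≅ C([0,1],X) ×_G P and E^r_B ≅ X^r ×_G P.) -/

import Mathlib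

open scoped unitInterval
open Topology

/-- The sectional category of a continuous map `p : E → B`: the least `n` such that `B`
admits a cover by `n+1` open sets, each admitting a continuous section of `p`. -/
noncomputable def secat {E B : Type*} [TopologicalSpace E] [TopologicalSpace B]
    (p : C(E, B)) : ℕ∞ :=
  sInf {n : ℕ∞ | ∃ m : ℕ, n = m ∧ ∃ U : Fin (m + 1) → Set B,
    (∀ i, IsOpen (U i)) ∧ (⋃ i, U i) = Set.univ ∧
    ∀ i, ∃ s : C((U i : Set B), E), ∀ x, p (s x) = (x : B)}

/-- The evaluation map `ρ_r : C([0,1], X) → X^r`, `γ ↦ (γ (t 0), …, γ (t (r-1)))`. -/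
noncomputable def pathEval (X : Type*) [TopologicalSpace X] {r : ℕ}
    (t : Fin r → unitInterval) : C(C(unitInterval, X), Fin r → X) :=
  ⟨fun γ i => γ (t i), continuous_pi fun i => ContinuousEvalConst.continuous_eval_const (t i)⟩

/-- The continuous map induced on orbit spaces by a `G`-equivariant continuous map. -/
noncomputable def inducedQuotMap {G A B : Type*} [Group G] [TopologicalSpace A]
    [TopologicalSpace B] [MulAction G A] [MulAction G B]
    (F : C(A, B)) (hF : ∀ (g : G) (a : A), F (g • a) = g • F a) :
    C(Quotient (MulAction.orbitRel G A), Quotient (MulAction.orbitRel G B)) :=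
  ⟨Quotient.map' F (fun a b hab => by
      obtain ⟨g, hg⟩ := MulAction.mem_orbit_iff.mp (MulAction.orbitRel_apply.mp hab)
      exact MulAction.orbitRel_apply.mpr
        (MulAction.mem_orbit_iff.mpr ⟨g, by rw [← hg, hF]⟩)),
    F.continuous.quotient_map' _⟩

/-- The sequential equivariant topological complexity defined with respect to a space `K`
with marked points `k 0, …, k (r-1)`. -/
noncomputable def eqTCVia (G X : Type*) [Group G] [TopologicalSpace X] [MulAction G X]
    {r : ℕ} (K : Type*) [TopologicalSpace K] (k : Fin r → K) : ℕ∞ :=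
  sInf {n : ℕ∞ | ∃ m : ℕ, n = m ∧ ∃ U : Fin (m + 1) → Set (Fin r → X),
    (∀ i, IsOpen (U i)) ∧ (⋃ i, U i) = Set.univ ∧
    (∀ i (g : G), ∀ x ∈ U i, g • x ∈ U i) ∧
    ∀ i, ∃ s : C((U i : Set (Fin r → X)), C(K, X)),
      (∀ x : U i, ∀ j, s x (k j) = (x : Fin r → X) j) ∧
      ∀ (x y : U i) (g : G), (y : Fin r → X) = g • (x : Fin r → X) →
        ∀ κ : K, s y κ = g • s x κ}

/-- The sequential equivariant topological complexity `TC_{r,G}(X)`, relative to the time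
points `0 = t 0 < t 1 < ⋯ < t (r-1) = 1` in `[0,1]`. -/
noncomputable def eqTC (G X : Type*) [Group G] [TopologicalSpace X] [MulAction G X]
    {r : ℕ} (t : Fin r → unitInterval) : ℕ∞ :=
  eqTCVia G X unitInterval t

/-- For a topological group `G` acting continuously on spaces `X` and `P` and
`r ≥ 2`, the sectional category of the map `ρ_r ×_G 1 : (C([0,1],X) × P)/G → (X^r × P)/G`
induced on orbit spaces of the diagonal actions by `ρ_r × id_P` is bounded above by the
sequential equivariant topological complexity `TC_{r,G}(X)`. -/
theorem secat_inducedQuotMap_le_eqTC {G X P : Type*} [Group G] [TopologicalSpace G]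
    [IsTopologicalGroup G] [TopologicalSpace X] [MulAction G X] [ContinuousSMul G X]
    [TopologicalSpace P] [MulAction G P] [ContinuousSMul G P]
    {r : ℕ} (hr : 2 ≤ r) (t : Fin r → unitInterval) (htm : StrictMono t)
    (ht0 : t ⟨0, by omega⟩ = 0) (ht1 : t ⟨r - 1, by omega⟩ = 1) :
    secat (inducedQuotMap (G := G) ((pathEval X t).prodMap (ContinuousMap.id P))
      (fun g z => by
        ext i
        · simp [pathEval]
        · simp)) ≤ eqTC G X t := by
    classical
  rw [secat, eqTC, eqTCVia]
  apply sInf_le_sInf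
  rintro n ⟨m, rfl, U, hUo, hUc, hUinv, hUs⟩
  set A := (Fin r → X) × P
  set q : A → Quotient (MulAction.orbitRel G A) := Quotient.mk _ with hq
  -- the open sets downstairs
  set V : Fin (m + 1) → Set (Quotient (MulAction.orbitRel G A)) :=
    fun i => {v | ∃ z : A, z.1 ∈ U i ∧ q z = v} with hV
  have hpre : ∀ i, q ⁻¹' V i = Prod.fst ⁻¹' U i := by
    intro i
    ext z
    constructor
    · rintro ⟨w, hw, hqw⟩
      obtain ⟨g, hg⟩ := MulAction.orbitRel_apply.mp (Quotient.exact hqw)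
      have : z.1 = g⁻¹ • w.1 := by
        rw [← hg]; exact (inv_smul_smul g z.1).symm
      rw [Set.mem_preimage, this]
      exact hUinv i g⁻¹ w.1 hw
    · intro h
      exact ⟨z, h, rfl⟩
  have hVopen : ∀ i, IsOpen (V i) := by
    intro i
    have : IsQuotientMap q := isQuotientMap_quotient_mk'
    rw [← this.isOpen_preimage, hpre]
    exact (hUo i).preimage continuous_fst
  refine ⟨m, rfl, V, hVopen, ?_, ?_⟩
  · -- cover
    rw [Set.eq_univ_iff_forall]
    intro v
    induction v using Quotient.ind with
    | _ z =>
      have : z.1 ∈ ⋃ i, U i := by rw [hUc]; trivial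
      obtain ⟨i, hi⟩ := Set.mem_iUnion.mp this
      exact Set.mem_iUnion.mpr ⟨i, z, hi, rfl⟩
  · intro i
    obtain ⟨s, hs1, hs2⟩ := hUs i
    have hmem : ∀ z : A, z ∈ q ⁻¹' V i → z.1 ∈ U i := by
      intro z hz; rw [hpre] at hz; exact hz
    -- the lift candidate upstairs
    set F : (q ⁻¹' V i) → Quotient (MulAction.orbitRel G (C(unitInterval, X) × P)) :=
      fun z => Quotient.mk _ (s ⟨z.val.1, hmem z.val z.2⟩, z.val.2) with hF
    have hFcont : Continuous F := by
      apply continuous_quotient_mk'.comp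
      exact (s.continuous.comp (((continuous_fst.comp
        continuous_subtype_val)).subtype_mk _)).prodMk
        (continuous_snd.comp continuous_subtype_val)
    set π : (q ⁻¹' V i) → V i := (V i).restrictPreimage q with hπ
    have hπq : IsQuotientMap π := isQuotientMap_quotient_mk'.restrictPreimage_isOpen (hVopen i)
    have hFconst : ∀ z w : (q ⁻¹' V i), π z = π w → F z = F w := by
      intro z w h
      have h' : q z.val = q w.val := congrArg Subtype.val h
      obtain ⟨g, hg⟩ := MulAction.orbitRel_apply.mp (Quotient.exact h')
      -- hg : g • w.val = z.val
      apply Quotient.sound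
      apply MulAction.orbitRel_apply.mpr
      refine MulAction.mem_orbit_iff.mpr ⟨g, ?_⟩
      have h1 : (z.val).1 = g • (w.val).1 := by rw [← hg]; rfl
      have h2 : (z.val).2 = g • (w.val).2 := by rw [← hg]; rfl
      refine Prod.ext ?_ ?_
      · show g • s ⟨(w.val).1, _⟩ = s ⟨(z.val).1, _⟩
        ext κ
        have := hs2 ⟨(w.val).1, hmem w.val w.2⟩ ⟨(z.val).1, hmem z.val z.2⟩ g h1 κ
        simpa using this.symm
      · exact h2.symm
    have hπsurj : Function.Surjective π :=
      fun v => by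
        obtain ⟨z, hz⟩ := Quotient.exists_rep v.val
        exact ⟨⟨z, by rw [Set.mem_preimage, hq, hz]; exact v.2⟩, Subtype.ext hz⟩
    set sec : V i → Quotient (MulAction.orbitRel G (C(unitInterval, X) × P)) :=
      fun v => F (Function.surjInv hπsurj v) with hsec
    have hsecπ : ∀ z, sec (π z) = F z :=
      fun z => hFconst _ z (Function.surjInv_eq hπsurj (π z))
    have hseccont : Continuous sec := by
      rw [hπq.continuous_iff]
      have : sec ∘ π = F := funext hsecπ
      rw [this]
      exact hFcont
    refine ⟨⟨sec, hseccont⟩, ?_⟩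
    intro v
    obtain ⟨z, hz⟩ := hπsurj v
    rw [← hz]
    show (inducedQuotMap _ _) (sec (π z)) = (π z : Quotient (MulAction.orbitRel G A))
    rw [hsecπ]
    have key : ((pathEval X t).prodMap (ContinuousMap.id P))
        (s ⟨z.val.1, hmem z.val z.2⟩, z.val.2) = z.val := by
      refine Prod.ext ?_ rfl
      funext j
      exact hs1 ⟨z.val.1, hmem z.val z.2⟩ j
    show Quotient.mk (MulAction.orbitRel G A) (((pathEval X t).prodMap (ContinuousMap.id P))
        (s ⟨z.val.1, hmem z.val z.2⟩, z.val.2)) = q z.val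
    rw [key]
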